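/- Let D be a regular dyadic subtree of the Cantor tree 2^{<ω}. Every infinite antichain of D has a subsequence which is either an increasing antichain of D or a decreasing antichain of D. -/

import Mathlib

/-- Two nodes of the Cantor tree `2^{<ω}` are incomparable. -/
def Incomp (s t : List Bool) : Prop := ¬ s <+: t ∧ ¬ t <+: s

/-- The meet `s ∧ t`: longest common initial segment of two nodes. -/
def meet : List Bool → List Bool → List Bool
  | a :: s, b :: t => if a = b then a :: meet s t else []
  | _, _ => []

/-- For incomparable `s, t`: `s ≺ t` iff `(s∧t)⌢0 ⊑ s` and `(s∧t)⌢1 ⊑ t`. -/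
def Prec (s t : List Bool) : Prop :=
  (meet s t ++ [false]) <+: s ∧ (meet s t ++ [true]) <+: t

/-- `e` is the canonical representation `t ↦ s_t` of a dyadic subtree: it preserves and
reflects the extension order `⊑` and the relation `≺`. -/
def DyadicSubtree (e : List Bool → List Bool) : Prop :=
  ∀ t₀ t₁ : List Bool, (t₀ <+: t₁ ↔ e t₀ <+: e t₁) ∧ (Prec t₀ t₁ ↔ Prec (e t₀) (e t₁))

/-- A dyadic subtree is regular if `|t₀| = |t₁| ↔ |s_{t₀}| = |s_{t₁}|`. -/
def RegularDyadic (e : List Bool → List Bool) : Prop :=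
  ∀ t₀ t₁ : List Bool, t₀.length = t₁.length ↔ (e t₀).length = (e t₁).length

/- ### Auxiliary lemmas about `meet` -/

theorem meet_nil_left (t : List Bool) : meet [] t = [] := by cases t <;> rfl

theorem meet_nil_right (s : List Bool) : meet s [] = [] := by cases s <;> rfl

theorem meet_cons (a b : Bool) (s t : List Bool) :
    meet (a :: s) (b :: t) = if a = b then a :: meet s t else [] := rfl

theorem meet_append : ∀ (a s t : List Bool), meet (a ++ s) (a ++ t) = a ++ meet s t
  | [], _, _ => rfl
  | x :: a, s, t => by simp [meet_cons, meet_append a s t]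

theorem meet_prefix_left : ∀ s t : List Bool, meet s t <+: s
  | [], t => by simp [meet_nil_left]
  | _ :: _, [] => by simp [meet_nil_right]
  | a :: s, b :: t => by
    rw [meet_cons]
    split
    · exact List.cons_prefix_cons.2 ⟨rfl, meet_prefix_left s t⟩
    · exact List.nil_prefix

theorem meet_prefix_right : ∀ s t : List Bool, meet s t <+: t
  | [], t => by simp [meet_nil_left]
  | _ :: _, [] => by simp [meet_nil_right]
  | a :: s, b :: t => by
    rw [meet_cons]
    split
    · next h => exact List.cons_prefix_cons.2 ⟨h, meet_prefix_right s t⟩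
    · exact List.nil_prefix

theorem prefix_meet {p s t : List Bool} (hs : p <+: s) (ht : p <+: t) : p <+: meet s t := by
  obtain ⟨s', rfl⟩ := hs
  obtain ⟨t', rfl⟩ := ht
  rw [meet_append]
  exact List.prefix_append p _

theorem meet_branch {b c : Bool} (h : b ≠ c) (a s t : List Bool) :
    meet (a ++ b :: s) (a ++ c :: t) = a := by
  rw [meet_append, meet_cons, if_neg h, List.append_nil]

theorem prec_mk (a s t : List Bool) : Prec (a ++ false :: s) (a ++ true :: t) := by
  rw [Prec, meet_branch (by simp) a s t]
  exact ⟨⟨s, by simp⟩, ⟨t, by simp⟩⟩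

/- ### The branch construction -/

section Branch

variable (u : ℕ → List Bool)

open Classical in
/-- A branch of the Cantor tree such that every initial segment has infinitely many
of the `u n` extending it. -/
noncomputable def chain : ℕ → List Bool
  | 0 => []
  | k + 1 => chain k ++ [if ({n | chain k ++ [true] <+: u n}).Infinite then true else false]

open Classical in
noncomputable def xbit (k : ℕ) : Bool :=
  if ({n | chain u k ++ [true] <+: u n}).Infinite then true else false

theorem chain_succ (k : ℕ) : chain u (k + 1) = chain u k ++ [xbit u k] := rfl

theorem chain_length : ∀ k, (chain u k).length = k
  | 0 => rfl
  | k + 1 => by simp [chain_succ, chain_length k]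

theorem chain_prefix {k m : ℕ} (h : k ≤ m) : chain u k <+: chain u m := by
  induction h with
  | refl => exact List.prefix_refl _
  | step _ ih => exact ih.trans ⟨_, (chain_succ u _).symm⟩

/-- The branch point of `u n` off the chain. -/
noncomputable def bp (n : ℕ) : ℕ := (meet (u n) (chain u (u n).length)).length

theorem eq_chain_of_prefix {l : List Bool} {k : ℕ} (h : l <+: chain u k) :
    l = chain u l.length := by
  have hlk : l.length ≤ k := by simpa [chain_length] using h.length_le
  have h1 : chain u l.length <+: chain u k := chain_prefix u hlk
  have h2 : l <+: chain u l.length :=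
    List.prefix_of_prefix_length_le h h1 (by simp [chain_length])
  exact h2.eq_of_length (by simp [chain_length])

theorem meet_chain_eq (n : ℕ) :
    meet (u n) (chain u (u n).length) = chain u (bp u n) :=
  eq_chain_of_prefix u (meet_prefix_right _ _)

theorem chain_bp_prefix (n : ℕ) : chain u (bp u n) <+: u n := by
  rw [← meet_chain_eq]; exact meet_prefix_left _ _

theorem bp_ge {L n : ℕ} (h : chain u L <+: u n) : L ≤ bp u n := by
  have hL : L ≤ (u n).length := by simpa [chain_length] using h.length_le
  have h2 : chain u L <+: meet (u n) (chain u (u n).length) :=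
    prefix_meet h (chain_prefix u hL)
  simpa [chain_length, bp] using h2.length_le

variable (hu : ∀ i j : ℕ, i ≠ j → Incomp (u i) (u j))
include hu


theorem split_infinite (p : List Bool) (h : {n | p <+: u n}.Infinite) :
    {n | p ++ [true] <+: u n}.Infinite ∨ {n | p ++ [false] <+: u n}.Infinite := by
  have hfin : {n | u n = p}.Finite := by
    apply Set.Subsingleton.finite
    intro i hi j hj
    by_contra hij
    exact (hu i j hij).1 (by rw [Set.mem_setOf_eq] at hi hj; rw [hi, hj])
  have hsub : {n | p <+: u n} \ {n | u n = p} ⊆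
      {n | p ++ [true] <+: u n} ∪ {n | p ++ [false] <+: u n} := by
    rintro n ⟨hp, hne⟩
    obtain ⟨r, hr⟩ := hp
    match r, hr with
    | [], hr => exact absurd (by simpa using hr.symm) hne
    | true :: r', hr => exact Or.inl ⟨r', by simpa using hr⟩
    | false :: r', hr => exact Or.inr ⟨r', by simpa using hr⟩
  exact Set.infinite_union.mp (((h.diff hfin).mono hsub))

theorem chain_infinite : ∀ k, {n | chain u k <+: u n}.Infinite := by
  intro k
  induction k with
  | zero =>
    have : {n : ℕ | chain u 0 <+: u n} = Set.univ := by
      ext n; simp [chain, List.nil_prefix]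
    rw [this]; exact Set.infinite_univ
  | succ k ih =>
    rw [chain_succ]
    by_cases h : ({n | chain u k ++ [true] <+: u n}).Infinite
    · have hx : xbit u k = true := by simp [xbit, h]
      rwa [hx]
    · have hx : xbit u k = false := by simp [xbit, h]
      rw [hx]
      rcases split_infinite u hu (chain u k) ih with h' | h'
      · exact absurd h' h
      · exact h'

theorem not_prefix_chain (n k : ℕ) : ¬ u n <+: chain u k := by
  intro h
  obtain ⟨m, hm, hmn⟩ := ((chain_infinite u hu k).diff (Set.finite_singleton n)).nonempty
  have hne : n ≠ m := fun e => hmn (by simp [e])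
  exact (hu n m hne).1 (h.trans hm)

theorem bp_lt (n : ℕ) : bp u n < (u n).length := by
  have hle : bp u n ≤ (u n).length := (meet_prefix_left (u n) _).length_le
  rcases lt_or_eq_of_le hle with h | h
  · exact h
  · exfalso
    have heq : meet (u n) (chain u (u n).length) = u n :=
      (meet_prefix_left _ _).eq_of_length h
    exact not_prefix_chain u hu n _ (heq ▸ meet_prefix_right (u n) (chain u (u n).length))

theorem branch_structure (n : ℕ) :
    ∃ r, u n = chain u (bp u n) ++ (!(xbit u (bp u n))) :: r := by
  obtain ⟨r, hr⟩ := chain_bp_prefix u n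
  match r, hr with
  | [], hr =>
    exfalso
    have h1 : (u n).length = bp u n := by
      rw [← hr]; simp [chain_length]
    have h2 := bp_lt u hu n
    omega
  | b :: r', hr =>
    refine ⟨r', ?_⟩
    have hb : b ≠ xbit u (bp u n) := by
      intro hbe
      have hpre : chain u (bp u n + 1) <+: u n := by
        rw [chain_succ, ← hbe]
        exact ⟨r', by simpa using hr⟩
      exact absurd (bp_ge u hpre) (by omega)
    have : b = !(xbit u (bp u n)) := by
      cases b <;> cases hxb : xbit u (bp u n) <;> simp_all
    rw [← this, hr]

/- ### The recursive subsequence -/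

noncomputable def phi : ℕ → ℕ
  | 0 => 0
  | n + 1 =>
    ((chain_infinite u hu ((u (phi n)).length)).exists_gt (phi n)).choose

theorem phi_spec (n : ℕ) :
    chain u ((u (phi u hu n)).length) <+: u (phi u hu (n + 1)) ∧
      phi u hu n < phi u hu (n + 1) := by
  have h := ((chain_infinite u hu ((u (phi u hu n)).length)).exists_gt
      (phi u hu n)).choose_spec
  exact ⟨h.1, h.2⟩

theorem phi_strictMono : StrictMono (phi u hu) :=
  strictMono_nat_of_lt_succ fun n => (phi_spec u hu n).2

theorem len_lt_succ (n : ℕ) :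
    (u (phi u hu n)).length < (u (phi u hu (n + 1))).length :=
  lt_of_le_of_lt (bp_ge u (phi_spec u hu n).1) (bp_lt u hu _)

theorem len_strictMono : StrictMono fun n => (u (phi u hu n)).length :=
  strictMono_nat_of_lt_succ fun n => len_lt_succ u hu n

theorem chain_pref_all {n m : ℕ} (h : n < m) :
    chain u ((u (phi u hu n)).length) <+: u (phi u hu m) := by
  obtain ⟨k, rfl⟩ : ∃ k, m = k + 1 := ⟨m - 1, by omega⟩
  have hnk : n ≤ k := by omega
  exact (chain_prefix u ((len_strictMono u hu).monotone hnk)).trans (phi_spec u hu k).1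

theorem bp_phi_ge {n m : ℕ} (h : n < m) :
    (u (phi u hu n)).length ≤ bp u (phi u hu m) :=
  bp_ge u (chain_pref_all u hu h)

theorem meet_phi {n m : ℕ} (h : n < m) :
    ∃ r r', u (phi u hu n) = chain u (bp u (phi u hu n)) ++ (!(xbit u (bp u (phi u hu n)))) :: r ∧
      u (phi u hu m) = chain u (bp u (phi u hu n)) ++ (xbit u (bp u (phi u hu n))) :: r' := by
  obtain ⟨r, hr⟩ := branch_structure u hu (phi u hu n)
  have h1 : chain u (bp u (phi u hu n) + 1) <+: u (phi u hu m) := by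
    have hp1 : bp u (phi u hu n) + 1 ≤ (u (phi u hu n)).length := bp_lt u hu _
    exact (chain_prefix u hp1).trans (chain_pref_all u hu h)
  obtain ⟨r', hr'⟩ := h1
  refine ⟨r, r', hr, ?_⟩
  rw [← hr', chain_succ]
  simp

theorem meet_phi_eq {n m : ℕ} (h : n < m) :
    meet (u (phi u hu n)) (u (phi u hu m)) = chain u (bp u (phi u hu n)) := by
  obtain ⟨r, r', hr, hr'⟩ := meet_phi u hu h
  rw [hr, hr']
  exact meet_branch (Bool.not_ne_self _) _ _ _

theorem cond2' {n m l : ℕ} (hnm : n < m) (hml : m < l) :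
    (u (phi u hu n)).length ≤ (meet (u (phi u hu m)) (u (phi u hu l))).length := by
  rw [meet_phi_eq u hu hml, chain_length]
  calc (u (phi u hu n)).length ≤ bp u (phi u hu m) := bp_phi_ge u hu hnm
  _ = bp u (phi u hu m) := rfl

theorem prec_phi_true {n m : ℕ} (h : n < m) (hx : xbit u (bp u (phi u hu n)) = true) :
    Prec (u (phi u hu n)) (u (phi u hu m)) := by
  obtain ⟨r, r', hr, hr'⟩ := meet_phi u hu h
  rw [hx] at hr hr'
  rw [hr, hr']
  exact prec_mk _ r r'

theorem prec_phi_false {n m : ℕ} (h : n < m) (hx : xbit u (bp u (phi u hu n)) = false) :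
    Prec (u (phi u hu m)) (u (phi u hu n)) := by
  obtain ⟨r, r', hr, hr'⟩ := meet_phi u hu h
  rw [hx] at hr hr'
  rw [hr, hr']
  exact prec_mk _ r' r

end Branch

/-- Every infinite antichain `(e(u n))` of a regular dyadic subtree `D` (with canonical
representation `e`, so that `|e t|_D = |t|` and `e t ∧_D e t' = e (t ∧ t')`) has a
subsequence which is an increasing or a decreasing antichain of `D`. -/
theorem antichain_has_increasing_or_decreasing_subsequence
    (e : List Bool → List Bool) (hdy : DyadicSubtree e) (hreg : RegularDyadic e)
    (u : ℕ → List Bool) (hinj : Function.Injective u)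
    (hanti : Pairwise fun i j => Incomp (e (u i)) (e (u j))) :
    ∃ φ : ℕ → ℕ, StrictMono φ ∧
      (((∀ n m, n < m → (u (φ n)).length < (u (φ m)).length) ∧
        (∀ n m l, n < m → m < l →
          (u (φ n)).length ≤ (meet (u (φ m)) (u (φ l))).length) ∧
        (∀ n m, n < m → Prec (e (u (φ n))) (e (u (φ m))))) ∨
       ((∀ n m, n < m → (u (φ n)).length < (u (φ m)).length) ∧
        (∀ n m l, n < m → m < l →
          (u (φ n)).length ≤ (meet (u (φ m)) (u (φ l))).length) ∧
        (∀ n m, n < m → Prec (e (u (φ m))) (e (u (φ n)))))) := by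
  have hu : ∀ i j : ℕ, i ≠ j → Incomp (u i) (u j) := by
    intro i j hij
    have h := hanti hij
    exact ⟨fun hp => h.1 ((hdy _ _).1.mp hp), fun hp => h.2 ((hdy _ _).1.mp hp)⟩
  set T : ℕ → Prop := fun n => xbit u (bp u (phi u hu n)) = true with hT
  by_cases hTinf : (setOf T).Infinite
  · refine ⟨phi u hu ∘ Nat.nth T, (phi_strictMono u hu).comp (Nat.nth_strictMono hTinf),
      Or.inl ⟨?_, ?_, ?_⟩⟩
    · intro n m h
      exact len_strictMono u hu ((Nat.nth_strictMono hTinf) h)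
    · intro n m l hnm hml
      exact cond2' u hu ((Nat.nth_strictMono hTinf) hnm) ((Nat.nth_strictMono hTinf) hml)
    · intro n m h
      exact (hdy _ _).2.mp (prec_phi_true u hu ((Nat.nth_strictMono hTinf) h)
        (Nat.nth_mem_of_infinite hTinf n))
  · have hF : (setOf fun n => ¬ T n).Infinite := by
      have h := (Set.not_infinite.mp hTinf).infinite_compl
      exact h
    refine ⟨phi u hu ∘ Nat.nth (fun n => ¬ T n),
      (phi_strictMono u hu).comp (Nat.nth_strictMono hF), Or.inr ⟨?_, ?_, ?_⟩⟩
    · intro n m h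
      exact len_strictMono u hu ((Nat.nth_strictMono hF) h)
    · intro n m l hnm hml
      exact cond2' u hu ((Nat.nth_strictMono hF) hnm) ((Nat.nth_strictMono hF) hml)
    · intro n m h
      have hmem := Nat.nth_mem_of_infinite hF n
      have hfalse : xbit u (bp u (phi u hu (Nat.nth (fun n => ¬ T n) n))) = false := by
        simpa [hT] using hmem
      exact (hdy _ _).2.mp (prec_phi_false u hu ((Nat.nth_strictMono hF) h) hfalse)
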